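/- The set S6 = {(x,y) ∈ ℤ×ℤ : x ≡ 3y (mod 7)} is a dominating set of the infinite triangular grid T6: every vertex of T6 not in S6 is adjacent to a vertex of S6. -/

import Mathlib

/-- The infinite triangular grid: vertices `ℤ × ℤ`, with `(x,y)` adjacent to `(x',y')` iff
`(x'−x, y'−y) ∈ {(1,0),(−1,0),(0,1),(0,−1),(1,1),(−1,−1)}`. -/
def T6 : SimpleGraph (ℤ × ℤ) where
  Adj p q :=
    (q.1 - p.1 = 1 ∧ q.2 - p.2 = 0) ∨ (q.1 - p.1 = -1 ∧ q.2 - p.2 = 0) ∨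
    (q.1 - p.1 = 0 ∧ q.2 - p.2 = 1) ∨ (q.1 - p.1 = 0 ∧ q.2 - p.2 = -1) ∨
    (q.1 - p.1 = 1 ∧ q.2 - p.2 = 1) ∨ (q.1 - p.1 = -1 ∧ q.2 - p.2 = -1)
  symm := by
    constructor
    intro p q h
    omega
  loopless := by
    constructor
    intro p h
    omega

/-- `S6 = {(x,y) : x ≡ 3y (mod 7)}`. -/
def S6 : Set (ℤ × ℤ) := {p | Int.ModEq 7 p.1 (3 * p.2)}

/-- `S6` is a dominating set of the infinite triangular grid `T6`. -/
theorem stmt_11 : ∀ p : ℤ × ℤ, p ∉ S6 → ∃ q ∈ S6, T6.Adj p q := by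
  rintro ⟨x, y⟩ h
  simp only [S6, Set.mem_setOf_eq, Int.ModEq] at h
  have h7 : (x - 3 * y) % 7 = 1 ∨ (x - 3 * y) % 7 = 2 ∨ (x - 3 * y) % 7 = 3 ∨
      (x - 3 * y) % 7 = 4 ∨ (x - 3 * y) % 7 = 5 ∨ (x - 3 * y) % 7 = 6 := by omega
  rcases h7 with hr | hr | hr | hr | hr | hr
  · exact ⟨(x - 1, y), by simp only [S6, Set.mem_setOf_eq, Int.ModEq]; omega,
      by simp only [T6]; omega⟩
  · exact ⟨(x + 1, y + 1), by simp only [S6, Set.mem_setOf_eq, Int.ModEq]; omega,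
      by simp only [T6]; omega⟩
  · exact ⟨(x, y + 1), by simp only [S6, Set.mem_setOf_eq, Int.ModEq]; omega,
      by simp only [T6]; omega⟩
  · exact ⟨(x, y - 1), by simp only [S6, Set.mem_setOf_eq, Int.ModEq]; omega,
      by simp only [T6]; omega⟩
  · exact ⟨(x - 1, y - 1), by simp only [S6, Set.mem_setOf_eq, Int.ModEq]; omega,
      by simp only [T6]; omega⟩
  · exact ⟨(x + 1, y), by simp only [S6, Set.mem_setOf_eq, Int.ModEq]; omega,
      by simp only [T6]; omega⟩
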